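/- arXiv:1307.0473 — 5 statements merged into one kernel-verified Lean document; each statement's English description precedes it below -/
import Mathlib

section
/- For a finite set X, a probability measure μ on X with full support, and real-valued functions g, h on X, define the Gibbs distributions μ_g(x) = μ(x)exp(g(x))/⟨μ, exp(g)⟩ and μ_h similarly. Then the Kullback–Leibler divergence satisfies D(μ_g ‖ μ_h) ≤ ‖g − h‖_s² / 8, where ‖f‖_s = max_x f(x) − min_x f(x) is the span seminorm. -/
open Finset Real

/-- The Gibbs distribution induced by base measure `μ` and (negative energy) function `f`. -/
noncomputable def gibbs {X : Type*} [Fintype X] (μ : X → ℝ) (f : X → ℝ) : X → ℝ :=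
  fun x => μ x * Real.exp (f x) / ∑ y, μ y * Real.exp (f y)

/-- Kullback–Leibler divergence between distributions on a finite set. -/
noncomputable def klDiv {X : Type*} [Fintype X] (ν ρ : X → ℝ) : ℝ :=
  ∑ x, ν x * Real.log (ν x / ρ x)

/-- Span seminorm (oscillation) of a function on a finite set. -/
noncomputable def spanSeminorm {X : Type*} [Fintype X] (f : X → ℝ) : ℝ :=
  (⨆ x, f x) - ⨅ x, f x

open Finset Real

/-- Finite Hoeffding-type lemma. -/
lemma hoeffding_fin {X : Type*} [Fintype X] [Nonempty X]
    (ρ : X → ℝ) (hρ : ∀ x, 0 < ρ x) (hρ1 : ∑ x, ρ x = 1)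
    (f : X → ℝ) (a b : ℝ) (hfa : ∀ x, a ≤ f x) (hfb : ∀ x, f x ≤ b) :
    Real.log (∑ x, ρ x * Real.exp (f x)) ≤ (∑ x, ρ x * f x) + (b - a) ^ 2 / 8 := by
  set M : ℝ := (b - a) ^ 2 / 4 with hM
  set S : ℝ → ℝ := fun t => ∑ x, ρ x * Real.exp (t * f x) with hS
  set N : ℝ → ℝ := fun t => ∑ x, ρ x * (f x * Real.exp (t * f x)) with hN
  set Q : ℝ → ℝ := fun t => ∑ x, ρ x * (f x * (f x * Real.exp (t * f x))) with hQ
  have Spos : ∀ t, 0 < S t := fun t =>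
    Finset.sum_pos (fun x _ => mul_pos (hρ x) (Real.exp_pos _)) univ_nonempty
  have hSd : ∀ t, HasDerivAt S (N t) t := by
    intro t
    have : ∀ x ∈ Finset.univ, HasDerivAt (fun t => ρ x * Real.exp (t * f x))
        (ρ x * (f x * Real.exp (t * f x))) t := by
      intro x _
      have h1 : HasDerivAt (fun t : ℝ => t * f x) (f x) t := hasDerivAt_mul_const _
      have h2 := h1.exp
      have h3 := h2.const_mul (ρ x)
      exact h3.congr_deriv (by ring)
    simpa using HasDerivAt.fun_sum this
  have hNd : ∀ t, HasDerivAt N (Q t) t := by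
    intro t
    have : ∀ x ∈ Finset.univ, HasDerivAt (fun t => ρ x * (f x * Real.exp (t * f x)))
        (ρ x * (f x * (f x * Real.exp (t * f x)))) t := by
      intro x _
      have h1 : HasDerivAt (fun t : ℝ => t * f x) (f x) t := hasDerivAt_mul_const _
      have h2 := h1.exp
      have h3 := h2.const_mul (ρ x * f x)
      exact (h3.congr_deriv (by ring)).congr_of_eventuallyEq (Filter.Eventually.of_forall fun s => by ring)
    simpa using HasDerivAt.fun_sum this
  set ψ : ℝ → ℝ := fun t => Real.log (S t) with hψ
  set D1 : ℝ → ℝ := fun t => N t / S t with hD1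
  have hψd : ∀ t, HasDerivAt ψ (D1 t) t := fun t => (hSd t).log (Spos t).ne'
  have hD1d : ∀ t, HasDerivAt D1 ((Q t * S t - N t * N t) / (S t) ^ 2) t := fun t =>
    (hNd t).div (hSd t) (Spos t).ne'
  -- second derivative bound
  have hvar : ∀ t, (Q t * S t - N t * N t) / (S t) ^ 2 ≤ M := by
    intro t
    rw [div_le_iff₀ (pow_pos (Spos t) 2)]
    set c : ℝ := (a + b) / 2 with hc
    have hid : ∀ x : X, ρ x * Real.exp (t * f x) * (f x - c) ^ 2 =
        ρ x * (f x * (f x * Real.exp (t * f x)))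
          - 2 * c * (ρ x * (f x * Real.exp (t * f x)))
          + c ^ 2 * (ρ x * Real.exp (t * f x)) := by intro x; ring
    have hsum : ∑ x, ρ x * Real.exp (t * f x) * (f x - c) ^ 2
        = Q t - 2 * c * N t + c ^ 2 * S t := by
      simp only [hid]
      rw [Finset.sum_add_distrib, Finset.sum_sub_distrib, ← Finset.mul_sum, ← Finset.mul_sum]
    have hub : ∑ x, ρ x * Real.exp (t * f x) * (f x - c) ^ 2 ≤ M * S t := by
      rw [hS, Finset.mul_sum]
      apply Finset.sum_le_sum
      intro x _
      have h1 : (f x - c) ^ 2 ≤ M := by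
        have := hfa x; have := hfb x
        rw [hM, hc]; nlinarith
      have h2 : 0 ≤ ρ x * Real.exp (t * f x) :=
        le_of_lt (mul_pos (hρ x) (Real.exp_pos _))
      calc ρ x * Real.exp (t * f x) * (f x - c) ^ 2 ≤ ρ x * Real.exp (t * f x) * M :=
            mul_le_mul_of_nonneg_left h1 h2
        _ = M * (ρ x * Real.exp (t * f x)) := by ring
    have key : Q t * S t - N t * N t
        = S t * (∑ x, ρ x * Real.exp (t * f x) * (f x - c) ^ 2) - (N t - c * S t) ^ 2 := by
      rw [hsum]; ring
    have hSt := Spos t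
    nlinarith [sq_nonneg (N t - c * S t), mul_le_mul_of_nonneg_left hub hSt.le]
  -- D1 t ≤ D1 0 + M * t on [0,1]
  have hu : AntitoneOn (fun t => D1 t - M * t) (Set.Icc 0 1) := by
    apply antitoneOn_of_deriv_nonpos (convex_Icc 0 1)
    · exact Continuous.continuousOn (by
        have : ∀ t, HasDerivAt (fun t => D1 t - M * t)
            ((Q t * S t - N t * N t) / (S t) ^ 2 - M) t := by
          intro t
          have h2 : HasDerivAt (fun s : ℝ => M * s) M t := by
            simpa using (hasDerivAt_id t).const_mul M
          exact (hD1d t).sub h2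
        exact continuous_iff_continuousAt.2 fun t => ((this t).differentiableAt).continuousAt)
    · intro t _
      have h2 : HasDerivAt (fun s : ℝ => M * s) M t := by
        simpa using (hasDerivAt_id t).const_mul M
      exact ((hD1d t).sub h2).differentiableAt.differentiableWithinAt
    · intro t _
      have hd : HasDerivAt (fun t => D1 t - M * t)
          ((Q t * S t - N t * N t) / (S t) ^ 2 - M) t := by
        have h2 : HasDerivAt (fun s : ℝ => M * s) M t := by
          simpa using (hasDerivAt_id t).const_mul M
        exact (hD1d t).sub h2
      rw [hd.deriv]
      linarith [hvar t]
  have hD1le : ∀ t ∈ Set.Icc (0:ℝ) 1, D1 t ≤ D1 0 + M * t := by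
    intro t ht
    have := hu (Set.left_mem_Icc.2 zero_le_one) ht ht.1
    simp only [mul_zero, sub_zero] at this
    linarith
  -- v antitone
  have hv : AntitoneOn (fun t => ψ t - D1 0 * t - M * t ^ 2 / 2) (Set.Icc 0 1) := by
    have hd : ∀ t, HasDerivAt (fun t => ψ t - D1 0 * t - M * t ^ 2 / 2)
        (D1 t - D1 0 - M * t) t := by
      intro t
      have h1 : HasDerivAt (fun s : ℝ => D1 0 * s) (D1 0) t := by
        simpa using (hasDerivAt_id t).const_mul (D1 0)
      have h2 : HasDerivAt (fun t : ℝ => M * t ^ 2 / 2) (M * t) t := by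
        have := ((hasDerivAt_pow 2 t).const_mul M).div_const 2
        exact this.congr_deriv (by push_cast; ring)
      have := ((hψd t).sub h1).sub h2
      exact this
    apply antitoneOn_of_deriv_nonpos (convex_Icc 0 1)
    · exact Continuous.continuousOn
        (continuous_iff_continuousAt.2 fun t => ((hd t).differentiableAt).continuousAt)
    · intro t _; exact (hd t).differentiableAt.differentiableWithinAt
    · intro t ht
      rw [(hd t).deriv]
      have ht' : t ∈ Set.Icc (0:ℝ) 1 := Set.mem_Icc_of_Ioo (by simpa using ht)
      have := hD1le t ht'
      linarith
  have hfinal := hv (Set.left_mem_Icc.2 zero_le_one) (Set.right_mem_Icc.2 zero_le_one) zero_le_one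
  have hS0 : S 0 = 1 := by simp [hS, hρ1]
  have hψ0 : ψ 0 = 0 := by simp [hψ, hS0]
  have hD10 : D1 0 = ∑ x, ρ x * f x := by
    simp [hD1, hN, hS0]
  have hψ1 : ψ 1 = Real.log (∑ x, ρ x * Real.exp (f x)) := by simp [hψ, hS]
  simp only [mul_zero, sub_zero, mul_one, one_pow, zero_pow, hψ0] at hfinal
  rw [← hψ1, ← hD10]
  have : (b - a) ^ 2 / 8 = M / 2 := by rw [hM]; ring
  rw [this]
  linarith

theorem klDiv_gibbs_le' {X : Type*} [Fintype X] [Nonempty X]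
    (μ : X → ℝ) (hpos : ∀ x, 0 < μ x) (hsum : ∑ x, μ x = 1) (g h : X → ℝ) :
    (∑ x, (fun x => μ x * Real.exp (g x) / ∑ y, μ y * Real.exp (g y)) x *
      Real.log ((fun x => μ x * Real.exp (g x) / ∑ y, μ y * Real.exp (g y)) x /
        (fun x => μ x * Real.exp (h x) / ∑ y, μ y * Real.exp (h y)) x)) ≤
      ((⨆ x, (g x - h x)) - ⨅ x, (g x - h x)) ^ 2 / 8 := by
  set Zg : ℝ := ∑ y, μ y * Real.exp (g y) with hZg
  set Zh : ℝ := ∑ y, μ y * Real.exp (h y) with hZh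
  have hZgpos : 0 < Zg := Finset.sum_pos (fun x _ => mul_pos (hpos x) (Real.exp_pos _)) univ_nonempty
  have hZhpos : 0 < Zh := Finset.sum_pos (fun x _ => mul_pos (hpos x) (Real.exp_pos _)) univ_nonempty
  set ν : X → ℝ := fun x => μ x * Real.exp (g x) / Zg with hν
  have hνpos : ∀ x, 0 < ν x := fun x => div_pos (mul_pos (hpos x) (Real.exp_pos _)) hZgpos
  have hνsum : ∑ x, ν x = 1 := by
    rw [hν, ← Finset.sum_div, ← hZg, div_self hZgpos.ne']
  set a : ℝ := -(⨆ x, (g x - h x)) with ha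
  set b : ℝ := -(⨅ x, (g x - h x)) with hb
  have hfa : ∀ x, a ≤ h x - g x := by
    intro x
    have : g x - h x ≤ ⨆ x, (g x - h x) :=
      le_ciSup (Set.finite_range (fun x => g x - h x)).bddAbove x
    rw [ha]; linarith
  have hfb : ∀ x, h x - g x ≤ b := by
    intro x
    have : (⨅ x, (g x - h x)) ≤ g x - h x :=
      ciInf_le (Set.finite_range (fun x => g x - h x)).bddBelow x
    rw [hb]; linarith
  have hoef := hoeffding_fin ν hνpos hνsum (fun x => h x - g x) a b hfa hfb
  have hba : b - a = (⨆ x, (g x - h x)) - ⨅ x, (g x - h x) := by rw [ha, hb]; ring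
  have hZquot : ∑ x, ν x * Real.exp (h x - g x) = Zh / Zg := by
    rw [hν, hZh, Finset.sum_div]
    apply Finset.sum_congr rfl
    intro x _
    rw [Real.exp_sub]
    field_simp
  rw [hZquot, Real.log_div hZhpos.ne' hZgpos.ne'] at hoef
  -- rewrite the KL sum
  have hkl : (∑ x, ν x * Real.log (ν x / (μ x * Real.exp (h x) / Zh)))
      = (∑ x, ν x * (h x - g x)) * (-1) + (Real.log Zh - Real.log Zg) := by
    have : ∀ x : X, ν x * Real.log (ν x / (μ x * Real.exp (h x) / Zh))
        = ν x * (h x - g x) * (-1) + ν x * (Real.log Zh - Real.log Zg) := by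
      intro x
      have hμx := hpos x
      have hlog : Real.log (ν x / (μ x * Real.exp (h x) / Zh))
          = (g x - h x) + (Real.log Zh - Real.log Zg) := by
        rw [hν]
        rw [Real.log_div (by positivity) (by positivity),
            Real.log_div (by positivity) hZgpos.ne',
            Real.log_div (by positivity) hZhpos.ne',
            Real.log_mul hμx.ne' (Real.exp_pos _).ne',
            Real.log_mul hμx.ne' (Real.exp_pos _).ne',
            Real.log_exp, Real.log_exp]
        ring
      rw [hlog]; ring
    rw [Finset.sum_congr rfl (fun x _ => this x), Finset.sum_add_distrib,
        ← Finset.sum_mul, ← Finset.sum_mul, hνsum]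
    ring
  calc (∑ x, ν x * Real.log (ν x / (μ x * Real.exp (h x) / Zh)))
      = (∑ x, ν x * (h x - g x)) * (-1) + (Real.log Zh - Real.log Zg) := hkl
    _ ≤ (b - a) ^ 2 / 8 := by linarith
    _ = ((⨆ x, (g x - h x)) - ⨅ x, (g x - h x)) ^ 2 / 8 := by rw [hba]

theorem klDiv_gibbs_le {X : Type*} [Fintype X] [Nonempty X]
    (μ : X → ℝ) (hpos : ∀ x, 0 < μ x) (hsum : ∑ x, μ x = 1) (g h : X → ℝ) :
    klDiv (gibbs μ g) (gibbs μ h) ≤ (spanSeminorm (fun x => g x - h x)) ^ 2 / 8 := by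
  have := klDiv_gibbs_le' μ hpos hsum g h
  simpa [klDiv, gibbs, spanSeminorm] using this
end

section
/- For a finite set X, a probability measure μ on X with full support, and real-valued functions g, h on X, the total variation distance between the associated Gibbs distributions satisfies ‖μ_g − μ_h‖_TV ≤ ‖g − h‖_s / 4. -/
open Finset Real

/-- Total variation distance between distributions on a finite set. -/
noncomputable def tvDist {X : Type*} [Fintype X] (ν ρ : X → ℝ) : ℝ :=
  (1 / 2) * ∑ x, |ν x - ρ x|

lemma two_mul_div_le_log' {u : ℝ} (hu : 1 ≤ u) :
    2 * (u - 1) / (u + 1) ≤ Real.log u := by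
  set f : ℝ → ℝ := fun v => Real.log v - 2 * (v - 1) / (v + 1) with hf
  have hderiv : ∀ v ∈ interior (Set.Ici (1:ℝ)), HasDerivAt f (1/v - 4/(v+1)^2) v := by
    intro v hv
    rw [interior_Ici] at hv
    have hv1 : (1:ℝ) < v := hv
    have h1 : HasDerivAt Real.log (1/v) v := by
      simpa [one_div] using Real.hasDerivAt_log (by linarith)
    have h2 : HasDerivAt (fun v : ℝ => 2*(v-1)) 2 v := by
      simpa using ((hasDerivAt_id v).sub_const 1).const_mul 2
    have h3 : HasDerivAt (fun v : ℝ => v+1) 1 v := (hasDerivAt_id v).add_const 1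
    have h4 := h2.div h3 (by linarith)
    have h5 := h1.sub h4
    have he : (2*(v+1) - 2*(v-1)*1) = 4 := by ring
    rw [he] at h5
    exact h5
  have hmono : MonotoneOn f (Set.Ici 1) := by
    apply monotoneOn_of_deriv_nonneg (convex_Ici 1)
    · apply ContinuousOn.sub
      · exact Real.continuousOn_log.mono (by intro x hx; simp; intro hx0; rw [hx0] at hx; simp at hx; linarith)
      · apply ContinuousOn.div
        · fun_prop
        · fun_prop
        · intro x hx; simp at hx; intro hc; linarith
    · intro v hv
      exact (hderiv v hv).differentiableAt.differentiableWithinAt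
    · intro v hv
      rw [(hderiv v hv).deriv]
      rw [interior_Ici] at hv
      have hv1 : (1:ℝ) < v := hv
      have : 4/(v+1)^2 ≤ 1/v := by
        rw [div_le_div_iff₀ (by positivity) (by linarith)]
        nlinarith [sq_nonneg (v-1)]
      linarith
  have h0 : f 1 = 0 := by simp [hf]
  have := hmono (Set.mem_Ici.mpr le_rfl) (Set.mem_Ici.mpr hu) hu
  rw [h0] at this
  simp only [hf] at this
  linarith

theorem tvDist_gibbs_le {X : Type*} [Fintype X] [Nonempty X]
    (μ : X → ℝ) (hpos : ∀ x, 0 < μ x) (hsum : ∑ x, μ x = 1) (g h : X → ℝ) :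
    tvDist (gibbs μ g) (gibbs μ h) ≤ spanSeminorm (fun x => g x - h x) / 4 := by
  classical
  set s : X → ℝ := fun x => g x - h x with hsdef
  have hbddA : BddAbove (Set.range s) := Set.Finite.bddAbove (Set.finite_range s)
  have hbddB : BddBelow (Set.range s) := Set.Finite.bddBelow (Set.finite_range s)
  set M := ⨆ x, s x with hM
  set m := ⨅ x, s x with hm
  have hle : ∀ x, s x ≤ M := fun x => le_ciSup hbddA x
  have hge : ∀ x, m ≤ s x := fun x => ciInf_le hbddB x
  obtain ⟨x0⟩ := (inferInstance : Nonempty X)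
  have hmM : m ≤ M := (hge x0).trans (hle x0)
  have hspan : spanSeminorm s = M - m := rfl
  rw [hspan]
  set Q : ℝ := ∑ x, μ x * Real.exp (h x) with hQ
  have hQpos : 0 < Q :=
    Finset.sum_pos (fun x _ => mul_pos (hpos x) (Real.exp_pos _)) Finset.univ_nonempty
  set p : X → ℝ := fun x => μ x * Real.exp (h x) / Q with hpdef
  have hp : ∀ x, 0 < p x := fun x =>
    div_pos (mul_pos (hpos x) (Real.exp_pos _)) hQpos
  have hpsum : ∑ x, p x = 1 := by
    simp only [hpdef]
    rw [← Finset.sum_div, ← hQ, div_self hQpos.ne']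
  set a : X → ℝ := fun x => Real.exp (s x) with hadef
  set E : ℝ := ∑ x, p x * a x with hE
  have hapos : ∀ x, 0 < a x := fun x => Real.exp_pos _
  have hEpos : 0 < E :=
    Finset.sum_pos (fun x _ => mul_pos (hp x) (hapos x)) Finset.univ_nonempty
  set A : ℝ := Real.exp M with hA
  set B : ℝ := Real.exp m with hB
  have haM : ∀ x, a x ≤ A := fun x => Real.exp_le_exp.mpr (hle x)
  have ham : ∀ x, B ≤ a x := fun x => Real.exp_le_exp.mpr (hge x)
  have hEle : E ≤ A := by
    calc E ≤ ∑ x, p x * A :=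
          Finset.sum_le_sum (fun x _ => mul_le_mul_of_nonneg_left (haM x) (hp x).le)
      _ = A := by rw [← Finset.sum_mul, hpsum, one_mul]
  have hEge : B ≤ E := by
    calc B = ∑ x, p x * B := by rw [← Finset.sum_mul, hpsum, one_mul]
      _ ≤ E := Finset.sum_le_sum (fun x _ => mul_le_mul_of_nonneg_left (ham x) (hp x).le)
  have hgh : ∀ x, gibbs μ h x = p x := fun x => rfl
  have hgg : ∀ x, gibbs μ g x = p x * a x / E := by
    intro x
    have hexp : ∀ y, μ y * Real.exp (g y) = (μ y * Real.exp (h y)) * a y := by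
      intro y
      have : g y = h y + s y := by simp [hsdef]
      rw [this, Real.exp_add, hadef]; ring
    have hZ : ∑ y, μ y * Real.exp (g y) = Q * E := by
      rw [hE, Finset.mul_sum]
      apply Finset.sum_congr rfl
      intro y _
      rw [hexp y, hpdef]
      field_simp
    rw [gibbs]
    rw [hZ, hexp x, hpdef]
    field_simp
  have htv : tvDist (gibbs μ g) (gibbs μ h) = (1/2) * ((∑ x, p x * |a x - E|) / E) := by
    rw [tvDist, Finset.sum_div]
    congr 1
    apply Finset.sum_congr rfl
    intro x _
    rw [hgg x, hgh x]
    have : p x * a x / E - p x = p x * (a x - E) / E := by field_simp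
    rw [this, abs_div, abs_mul, abs_of_pos (hp x), abs_of_pos hEpos]
  rw [htv]
  rcases eq_or_lt_of_le hmM with heq | hlt
  · -- degenerate case: m = M
    have hall : ∀ x, a x = E := by
      intro x
      have h1 := haM x
      have h2 := ham x
      have : A = B := by rw [hA, hB, heq]
      have hx : a x = A := le_antisymm (haM x) (by rw [this]; exact ham x)
      have hEA : E = A := le_antisymm hEle (by linarith)
      rw [hx, hEA]
    have : ∑ x, p x * |a x - E| = 0 := by
      apply Finset.sum_eq_zero
      intro x _
      rw [hall x]; simp
    rw [this]
    simp only [zero_div, mul_zero]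
    linarith
  · -- main case: m < M
    have hBA : B < A := Real.exp_lt_exp.mpr hlt
    set α : ℝ := Real.exp (M/2) with hα
    set β : ℝ := Real.exp (m/2) with hβ
    have hαpos : 0 < α := Real.exp_pos _
    have hβpos : 0 < β := Real.exp_pos _
    have hA2 : A = α^2 := by
      rw [hA, hα, pow_two, ← Real.exp_add]; congr 1; ring
    have hB2 : B = β^2 := by
      rw [hB, hβ, pow_two, ← Real.exp_add]; congr 1; ring
    have hβα : β < α := Real.exp_lt_exp.mpr (by linarith)
    clear_value s M m Q p a E A B α β
    have hkey : ∑ x, p x * |a x - E| ≤ 2 * (A - E) * (E - B) / (A - B) := by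
      have hAB : 0 < A - B := by linarith
      calc ∑ x, p x * |a x - E|
          ≤ ∑ x, p x * (((A - a x) * (E - B) + (a x - B) * (A - E)) / (A - B)) := by
            apply Finset.sum_le_sum
            intro x _
            apply mul_le_mul_of_nonneg_left _ (hp x).le
            rw [le_div_iff₀ hAB]
            rcases le_total (a x) E with h1 | h1
            · rw [abs_of_nonpos (by linarith)]
              nlinarith [haM x, ham x, hEle, hEge]
            · rw [abs_of_nonneg (by linarith)]
              nlinarith [haM x, ham x, hEle, hEge]
        _ = 2 * (A - E) * (E - B) / (A - B) := by
            have expand : ∀ x, p x * (((A - a x) * (E - B) + (a x - B) * (A - E)) / (A - B))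
                = ((A + B - 2*E) * (p x * a x) + ((A + B) * E - 2*A*B) * p x) / (A - B) := by
              intro x; field_simp; ring
            rw [Finset.sum_congr rfl (fun x _ => expand x), ← Finset.sum_div]
            congr 1
            rw [Finset.sum_add_distrib, ← Finset.mul_sum, ← Finset.mul_sum, ← hE, hpsum]
            ring
    have step1 : (1/2) * ((∑ x, p x * |a x - E|) / E) ≤ (A - E) * (E - B) / (E * (A - B)) := by
      calc (1/2) * ((∑ x, p x * |a x - E|) / E)
          ≤ (1/2) * (2 * (A - E) * (E - B) / (A - B) / E) := by
            apply mul_le_mul_of_nonneg_left _ (by norm_num)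
            exact div_le_div_of_nonneg_right hkey hEpos.le
        _ = (A - E) * (E - B) / (E * (A - B)) := by
            have h1 : E ≠ 0 := hEpos.ne'
            have h2 : A - B ≠ 0 := by linarith
            field_simp
    have step2 : (A - E) * (E - B) / (E * (A - B)) ≤ (α - β) / (α + β) := by
      have hden1 : (0:ℝ) < E * (A - B) := mul_pos hEpos (by linarith)
      have hden2 : (0:ℝ) < α + β := by linarith
      have key2 : (A - E) * (E - B) * (α + β) ≤ (α - β) * (E * (A - B)) := by
        rw [hA2, hB2]
        have hid : (α - β) * (E * (α^2 - β^2)) - (α^2 - E) * (E - β^2) * (α + β)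
            = (α + β) * (E - α*β)^2 := by ring
        linarith [hid, mul_nonneg (le_of_lt hden2) (sq_nonneg (E - α*β))]
      exact (div_le_div_iff₀ hden1 hden2).mpr key2
    have step3 : (α - β) / (α + β) ≤ (M - m) / 4 := by
      set u : ℝ := Real.exp ((M - m)/2) with hu
      have hu1 : 1 ≤ u := Real.one_le_exp (by linarith)
      have hαu : α = β * u := by
        rw [hα, hβ, hu, ← Real.exp_add]; congr 1; ring
      have hlog : Real.log u = (M - m)/2 := Real.log_exp _
      have := two_mul_div_le_log' hu1
      rw [hlog] at this
      have hβu : β * 1 ≤ β * u := mul_le_mul_of_nonneg_left hu1 hβpos.le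
      have hd1 : (0:ℝ) < β * u + β := by linarith only [hβu, hβpos]
      have hd2 : (0:ℝ) < u + 1 := by linarith only [hu1]
      have heq2 : (α - β) / (α + β) = (u - 1) / (u + 1) := by
        rw [hαu, div_eq_div_iff hd1.ne' hd2.ne']
        ring
      rw [heq2]
      have hassoc : 2 * (u - 1) / (u + 1) = 2 * ((u - 1) / (u + 1)) := by
        rw [mul_div_assoc]
      linarith only [this, hassoc]
    linarith only [step1, step2, step3]
end

section
/- For a finite set X, full-support μ₀ ∈ P(X), β > 0, and cost functions f_t: X → ℝ, define π₁ = μ₀ and recursively π_{t+1} = argmin over π ∈ P(X) of γ_t[β⟨π, f_t⟩ + D(π‖μ₀)] + D(π‖π_t) with γ_t = 1/t. Then for all t ≥ 0, π_{t+1}(x) = μ₀(x)exp(−β F_t(x))/Z̃_{t+1}, where F₀ = 0 and F_t = (1/(t+1))Σ_{s=1}^t f_s, and Z̃_{t+1} is a normalization constant. -/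
open Finset Real

def IsProb {X : Type*} [Fintype X] (ν : X → ℝ) : Prop :=
  (∀ x, 0 ≤ ν x) ∧ ∑ x, ν x = 1

lemma klDiv_self_eq_zero {X : Type*} [Fintype X] {q : X → ℝ} (hq : ∀ x, 0 < q x) :
    klDiv q q = 0 := by
  unfold klDiv
  refine Finset.sum_eq_zero fun x _ => ?_
  rw [div_self (hq x).ne', Real.log_one, mul_zero]

lemma klDiv_nonpos_imp_eq {X : Type*} [Fintype X] {ν q : X → ℝ} (hν : IsProb ν)
    (hq : ∀ x, 0 < q x) (hqs : ∑ x, q x = 1) (h : klDiv ν q ≤ 0) : ∀ x, ν x = q x := by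
  have hterm : ∀ x, 0 ≤ ν x * Real.log (ν x / q x) - ν x + q x := by
    intro x
    rcases eq_or_lt_of_le (hν.1 x) with h0 | h0
    · simp [← h0]
      exact (hq x).le
    · have hlt := Real.log_le_sub_one_of_pos (div_pos (hq x) h0)
      have h1 : ν x * Real.log (q x / ν x) ≤ ν x * (q x / ν x - 1) :=
        mul_le_mul_of_nonneg_left hlt h0.le
      have h2 : ν x * (q x / ν x) = q x := by field_simp
      have hlog : Real.log (ν x / q x) = - Real.log (q x / ν x) := by
        rw [← Real.log_inv]
        congr 1
        field_simp
      rw [hlog]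
      nlinarith
  have hs0 : ∑ x, (ν x * Real.log (ν x / q x) - ν x + q x) = 0 := by
    have hle : ∑ x, (ν x * Real.log (ν x / q x) - ν x + q x) ≤ 0 := by
      have : ∑ x, (ν x * Real.log (ν x / q x) - ν x + q x)
          = klDiv ν q - (∑ x, ν x) + (∑ x, q x) := by
        unfold klDiv
        rw [Finset.sum_add_distrib, Finset.sum_sub_distrib]
      rw [this, hν.2, hqs]
      linarith
    exact le_antisymm hle (Finset.sum_nonneg fun x _ => hterm x)
  have hzero : ∀ x, ν x * Real.log (ν x / q x) - ν x + q x = 0 := by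
    intro x
    have := (Finset.sum_eq_zero_iff_of_nonneg (fun x _ => hterm x)).mp hs0
    exact this x (Finset.mem_univ x)
  intro x
  have hx := hzero x
  rcases eq_or_lt_of_le (hν.1 x) with h0 | h0
  · exfalso
    simp [← h0] at hx
    exact (hq x).ne' hx
  · by_contra hne
    have hr : q x / ν x ≠ 1 := by
      intro h1
      apply hne
      field_simp at h1
      linarith
    have hlt := Real.log_lt_sub_one_of_pos (div_pos (hq x) h0) hr
    have h1 : ν x * Real.log (q x / ν x) < ν x * (q x / ν x - 1) :=
      mul_lt_mul_of_pos_left hlt h0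
    have h2 : ν x * (q x / ν x) = q x := by field_simp
    have hlog : Real.log (ν x / q x) = - Real.log (q x / ν x) := by
      rw [← Real.log_inv]
      congr 1
      field_simp
    rw [hlog] at hx
    nlinarith

/-- If `p 1 = μ₀` and for each `t ≥ 1`, `p (t+1)` minimizes
`ν ↦ γ_t [β⟨ν,f_t⟩ + D(ν‖μ₀)] + D(ν‖p t)` with `γ_t = 1/t` over probability
distributions, then `p (t+1)` has the Gibbs form `μ₀ exp(−β F_t)/Z̃` with
`F_0 = 0` and `F_t = (1/(t+1)) ∑_{s=1}^t f_s`. -/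
theorem mirror_descent_strategy_gibbs_form {X : Type*} [Fintype X] [Nonempty X]
    (μ₀ : X → ℝ) (hpos : ∀ x, 0 < μ₀ x) (hsum : ∑ x, μ₀ x = 1)
    (β : ℝ) (hβ : 0 < β) (f : ℕ → X → ℝ)
    (F : ℕ → X → ℝ) (hF : ∀ t x, F t x = (1 / ((t : ℝ) + 1)) * ∑ s ∈ Finset.Icc 1 t, f s x)
    (p : ℕ → X → ℝ)
    (hp1 : p 1 = μ₀)
    (hprob : ∀ t : ℕ, 1 ≤ t → IsProb (p (t + 1)))
    (hmin : ∀ t : ℕ, 1 ≤ t → ∀ ν : X → ℝ, IsProb ν →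
      (1 / (t : ℝ)) * (β * (∑ x, p (t + 1) x * f t x) + klDiv (p (t + 1)) μ₀)
          + klDiv (p (t + 1)) (p t)
        ≤ (1 / (t : ℝ)) * (β * (∑ x, ν x * f t x) + klDiv ν μ₀) + klDiv ν (p t)) :
    ∀ t : ℕ, ∃ Z : ℝ, 0 < Z ∧ ∀ x, p (t + 1) x = μ₀ x * Real.exp (-β * F t x) / Z := by
  intro t
  induction t with
  | zero =>
    refine ⟨1, one_pos, fun x => ?_⟩
    rw [hp1, hF]
    simp
  | succ t ih =>
    obtain ⟨Z', hZ', hps⟩ := ih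
    -- notation
    set T : ℝ := (t : ℝ) + 1 with hT
    have hTpos : (0 : ℝ) < T := by positivity
    set Z : ℝ := ∑ x, μ₀ x * Real.exp (-β * F (t + 1) x) with hZdef
    have hZpos : 0 < Z := Finset.sum_pos
      (fun x _ => mul_pos (hpos x) (Real.exp_pos _))
      ⟨Classical.arbitrary X, Finset.mem_univ _⟩
    refine ⟨Z, hZpos, ?_⟩
    set q : X → ℝ := fun x => μ₀ x * Real.exp (-β * F (t + 1) x) / Z with hqdef
    have hqpos : ∀ x, 0 < q x := fun x =>
      div_pos (mul_pos (hpos x) (Real.exp_pos _)) hZpos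
    have hqsum : ∑ x, q x = 1 := by
      rw [hqdef]
      simp only
      rw [← Finset.sum_div, ← hZdef, div_self hZpos.ne']
    have hqprob : IsProb q := ⟨fun x => (hqpos x).le, hqsum⟩
    -- the `F` recursion
    have hFrec : ∀ x, (1 + 1 / T) * F (t + 1) x = F t x + (1 / T) * f (t + 1) x := by
      intro x
      rw [hF, hF, Finset.sum_Icc_succ_top (by omega : 1 ≤ t + 1)]
      push_cast
      rw [hT]
      field_simp
    -- the key identity
    have key : ∀ ν : X → ℝ, IsProb ν →
        (1 / T) * (β * (∑ x, ν x * f (t + 1) x) + klDiv ν μ₀) + klDiv ν (p (t + 1))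
          = (1 + 1 / T) * klDiv ν q + (-(1 + 1 / T) * Real.log Z + Real.log Z') := by
      intro ν hν
      have lhs_eq : (1 / T) * (β * (∑ x, ν x * f (t + 1) x) + klDiv ν μ₀)
            + klDiv ν (p (t + 1))
          = ∑ x, ((1 / T) * (β * (ν x * f (t + 1) x) + ν x * Real.log (ν x / μ₀ x))
              + ν x * Real.log (ν x / p (t + 1) x)) := by
        unfold klDiv
        rw [Finset.sum_add_distrib]
        congr 1
        rw [← Finset.mul_sum]
        congr 1
        rw [Finset.sum_add_distrib, ← Finset.mul_sum]
      have rhs_eq : (1 + 1 / T) * klDiv ν q + (-(1 + 1 / T) * Real.log Z + Real.log Z')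
          = ∑ x, ((1 + 1 / T) * (ν x * Real.log (ν x / q x))
              + ν x * (-(1 + 1 / T) * Real.log Z + Real.log Z')) := by
        unfold klDiv
        rw [Finset.sum_add_distrib, ← Finset.mul_sum, ← Finset.sum_mul, hν.2, one_mul]
      rw [lhs_eq, rhs_eq]
      refine Finset.sum_congr rfl fun x _ => ?_
      rcases eq_or_lt_of_le (hν.1 x) with h0 | h0
      · simp [← h0]
      · have hμ := hpos x
        have hpsx : 0 < p (t + 1) x := by rw [hps]; positivity
        have hqx := hqpos x
        rw [Real.log_div h0.ne' hμ.ne', Real.log_div h0.ne' hpsx.ne',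
          Real.log_div h0.ne' (hqx).ne', hps x, hqdef]
        simp only
        rw [Real.log_div (by positivity) hZ'.ne', Real.log_mul hμ.ne' (Real.exp_ne_zero _),
          Real.log_exp, Real.log_div (by positivity) hZpos.ne',
          Real.log_mul hμ.ne' (Real.exp_ne_zero _), Real.log_exp]
        have hrec := hFrec x
        linear_combination (-(β * ν x)) * hrec
    -- apply optimality at ν = q
    have hopt := hmin (t + 1) (by omega) q hqprob
    have hcast : ((t + 1 : ℕ) : ℝ) = T := by push_cast; rw [hT]
    rw [hcast] at hopt
    have hk1 := key (p (t + 1 + 1)) (hprob (t + 1) (by omega))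
    have hk2 := key q hqprob
    rw [hk1, hk2, klDiv_self_eq_zero hqpos] at hopt
    have hklle : klDiv (p (t + 1 + 1)) q ≤ 0 := by
      have h1T : (0 : ℝ) < 1 + 1 / T := by positivity
      nlinarith [hopt]
    have := klDiv_nonpos_imp_eq (hprob (t + 1) (by omega)) hqpos hqsum hklle
    intro x
    rw [this x, hqdef]
end

section
/- Consider the online strategy π₁ = μ₀, π_{t+1}(x) ∝ μ₀(x)exp(−βF_t(x)) with F_t = (1/(t+1))Σ_{s=1}^t f_s, and losses ℓ_t(ν) = β⟨ν,f_t⟩ + D(ν‖μ₀). Then for any ν ∈ P(X) and any T ≥ 1, Σ_{t=1}^T [ℓ_t(π_t) − ℓ_t(ν)] = Σ_{t=1}^T (t+1) D(π_t‖π_{t+1}) + D(ν‖μ₀) − (T+1)D(ν‖π_{T+1}). -/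
open Finset Real

lemma gibbs_Zpos {X : Type*} [Fintype X] [Nonempty X] (μ₀ : X → ℝ) (hpos : ∀ x, 0 < μ₀ x)
    (g : X → ℝ) : 0 < ∑ y, μ₀ y * Real.exp (g y) :=
  Finset.sum_pos (fun y _ => mul_pos (hpos y) (Real.exp_pos _)) Finset.univ_nonempty

lemma gibbs_pos {X : Type*} [Fintype X] [Nonempty X] (μ₀ : X → ℝ) (hpos : ∀ x, 0 < μ₀ x)
    (g : X → ℝ) (x : X) : 0 < gibbs μ₀ g x :=
  div_pos (mul_pos (hpos x) (Real.exp_pos _)) (gibbs_Zpos μ₀ hpos g)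

lemma gibbs_sum {X : Type*} [Fintype X] [Nonempty X] (μ₀ : X → ℝ) (hpos : ∀ x, 0 < μ₀ x)
    (g : X → ℝ) : ∑ x, gibbs μ₀ g x = 1 := by
  unfold gibbs
  rw [← Finset.sum_div]
  exact div_self (ne_of_gt (gibbs_Zpos μ₀ hpos g))

lemma gibbs_kl {X : Type*} [Fintype X] [Nonempty X] (μ₀ : X → ℝ) (hpos : ∀ x, 0 < μ₀ x)
    (g : X → ℝ) (ν : X → ℝ) (hν0 : ∀ x, 0 ≤ ν x) (hν1 : ∑ x, ν x = 1) :
    klDiv ν (gibbs μ₀ g) = klDiv ν μ₀ - (∑ x, ν x * g x)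
      + Real.log (∑ y, μ₀ y * Real.exp (g y)) := by
  have hZ : 0 < ∑ y, μ₀ y * Real.exp (g y) := gibbs_Zpos μ₀ hpos g
  unfold klDiv gibbs
  have hterm : ∀ x, ν x * Real.log (ν x / (μ₀ x * Real.exp (g x) / ∑ y, μ₀ y * Real.exp (g y)))
      = ν x * Real.log (ν x / μ₀ x) - ν x * g x
        + ν x * Real.log (∑ y, μ₀ y * Real.exp (g y)) := by
    intro x
    by_cases h : ν x = 0
    · simp [h]
    · have hν : 0 < ν x := lt_of_le_of_ne (hν0 x) (Ne.symm h)
      have h1 : μ₀ x ≠ 0 := ne_of_gt (hpos x)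
      have h3 : (∑ y, μ₀ y * Real.exp (g y)) ≠ 0 := ne_of_gt hZ
      have key : ν x / (μ₀ x * Real.exp (g x) / ∑ y, μ₀ y * Real.exp (g y))
          = (ν x / μ₀ x) * Real.exp (-(g x)) * (∑ y, μ₀ y * Real.exp (g y)) := by
        rw [Real.exp_neg]
        field_simp
      rw [key, Real.log_mul (mul_ne_zero (div_ne_zero h h1) (Real.exp_ne_zero _)) h3,
        Real.log_mul (div_ne_zero h h1) (Real.exp_ne_zero _), Real.log_exp]
      ring
  rw [Finset.sum_congr rfl (fun x _ => hterm x)]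
  rw [Finset.sum_add_distrib, Finset.sum_sub_distrib, ← Finset.sum_mul, hν1, one_mul]

/-- Exact telescoping regret identity for the strategy `p_{t+1} ∝ μ₀ exp(−β F_t)`:
for any `ν ∈ P(X)` and `T ≥ 1`,
`∑_{t=1}^T [ℓ_t(p_t) − ℓ_t(ν)] = ∑_{t=1}^T (t+1) D(p_t‖p_{t+1}) + D(ν‖μ₀) − (T+1)D(ν‖p_{T+1})`. -/
theorem regret_telescoping_identity {X : Type*} [Fintype X] [Nonempty X]
    (μ₀ : X → ℝ) (hpos : ∀ x, 0 < μ₀ x) (hsum : ∑ x, μ₀ x = 1)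
    (β : ℝ) (hβ : 0 < β) (f : ℕ → X → ℝ)
    (F : ℕ → X → ℝ) (hF : ∀ t x, F t x = (1 / ((t : ℝ) + 1)) * ∑ s ∈ Finset.Icc 1 t, f s x)
    (p : ℕ → X → ℝ) (hp : ∀ t : ℕ, 1 ≤ t → p t = gibbs μ₀ (fun x => -β * F (t - 1) x))
    (ℓ : ℕ → (X → ℝ) → ℝ)
    (hℓ : ∀ t ν, ℓ t ν = β * (∑ x, ν x * f t x) + klDiv ν μ₀)
    (ν : X → ℝ) (hν : IsProb ν) (T : ℕ) (hT : 1 ≤ T) :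
    ∑ t ∈ Finset.Icc 1 T, (ℓ t (p t) - ℓ t ν) =
      (∑ t ∈ Finset.Icc 1 T, ((t : ℝ) + 1) * klDiv (p t) (p (t + 1)))
        + klDiv ν μ₀ - ((T : ℝ) + 1) * klDiv ν (p (T + 1)) := by
  obtain ⟨hν0, hν1⟩ := hν
  set W : ℕ → ℝ := fun t => Real.log (∑ y, μ₀ y * Real.exp (-β * F t y)) with hW
  -- KL against p t expands
  have hkl : ∀ t : ℕ, 1 ≤ t → ∀ σ : X → ℝ, (∀ x, 0 ≤ σ x) → (∑ x, σ x = 1) →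
      klDiv σ (p t) = klDiv σ μ₀ + β * (∑ x, σ x * F (t-1) x) + W (t-1) := by
    intro t ht σ hσ0 hσ1
    rw [hp t ht, gibbs_kl μ₀ hpos _ σ hσ0 hσ1]
    have hs : ∑ x, σ x * (-β * F (t-1) x) = -(β * ∑ x, σ x * F (t-1) x) := by
      calc ∑ x, σ x * (-β * F (t-1) x) = ∑ x, -(β * (σ x * F (t-1) x)) :=
            Finset.sum_congr rfl (fun x _ => by ring)
        _ = -(β * ∑ x, σ x * F (t-1) x) := by
            rw [Finset.sum_neg_distrib, Finset.mul_sum]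
    rw [hs, hW]
    ring
  have hpprob : ∀ t : ℕ, 1 ≤ t → (∀ x, 0 < p t x) ∧ ∑ x, p t x = 1 := by
    intro t ht
    rw [hp t ht]
    exact ⟨gibbs_pos μ₀ hpos _, gibbs_sum μ₀ hpos _⟩
  have hself : ∀ t : ℕ, 1 ≤ t → klDiv (p t) (p t) = 0 := by
    intro t ht
    apply Finset.sum_eq_zero
    intro x _
    rw [div_self (ne_of_gt ((hpprob t ht).1 x)), Real.log_one, mul_zero]
  have hFrec : ∀ t : ℕ, 1 ≤ t → ∀ x,
      ((t:ℝ)+1) * F t x - (t:ℝ) * F (t-1) x = f t x := by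
    intro t ht x
    obtain ⟨s, rfl⟩ : ∃ s, t = s + 1 := ⟨t - 1, (Nat.succ_pred_eq_of_pos ht).symm⟩
    rw [hF, hF]
    simp only [Nat.add_sub_cancel]
    rw [Finset.sum_Icc_succ_top (by omega : 1 ≤ s + 1)]
    have h1 : ((s:ℝ)+1) ≠ 0 := by positivity
    have h2 : ((s:ℝ)+1+1) ≠ 0 := by positivity
    push_cast
    field_simp
    ring
  have hloss : ∀ t : ℕ, 1 ≤ t → ∀ σ : X → ℝ, (∀ x, 0 ≤ σ x) → (∑ x, σ x = 1) →
      ℓ t σ = ((t:ℝ)+1) * klDiv σ (p (t+1)) - (t:ℝ) * klDiv σ (p t)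
        - (((t:ℝ)+1) * W t - (t:ℝ) * W (t-1)) := by
    intro t ht σ h0 h1
    rw [hℓ, hkl t ht σ h0 h1, hkl (t+1) (by omega) σ h0 h1]
    simp only [Nat.add_sub_cancel]
    have key : ((t:ℝ)+1) * (β * ∑ x, σ x * F t x) - (t:ℝ) * (β * ∑ x, σ x * F (t-1) x)
        = β * ∑ x, σ x * f t x := by
      have e1 : ∑ x, σ x * f t x
          = ∑ x, (((t:ℝ)+1) * (σ x * F t x) - (t:ℝ) * (σ x * F (t-1) x)) := by
        apply Finset.sum_congr rfl
        intro x _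
        rw [show ((t:ℝ)+1) * (σ x * F t x) - (t:ℝ) * (σ x * F (t-1) x)
            = σ x * (((t:ℝ)+1) * F t x - (t:ℝ) * F (t-1) x) by ring, hFrec t ht x]
      rw [e1, Finset.sum_sub_distrib, ← Finset.mul_sum, ← Finset.mul_sum]
      ring
    linear_combination -key
  have hstep : ∀ t : ℕ, 1 ≤ t →
      ℓ t (p t) - ℓ t ν = ((t:ℝ)+1) * klDiv (p t) (p (t+1))
        + ((t:ℝ) * klDiv ν (p t) - ((t:ℝ)+1) * klDiv ν (p (t+1))) := by
    intro t ht
    rw [hloss t ht (p t) (fun x => le_of_lt ((hpprob t ht).1 x)) (hpprob t ht).2,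
      hloss t ht ν hν0 hν1, hself t ht]
    ring
  have htele : ∑ t ∈ Finset.Icc 1 T, ((t:ℝ) * klDiv ν (p t) - ((t:ℝ)+1) * klDiv ν (p (t+1)))
      = klDiv ν (p 1) - ((T:ℝ)+1) * klDiv ν (p (T+1)) := by
    set g : ℕ → ℝ := fun i => ((i:ℝ)+1) * klDiv ν (p (i+1)) with hg
    have hconv : ∀ t ∈ Finset.Icc 1 T,
        (t:ℝ) * klDiv ν (p t) - ((t:ℝ)+1) * klDiv ν (p (t+1)) = g (t-1) - g t := by
      intro t htm
      obtain ⟨h1, _⟩ := Finset.mem_Icc.mp htm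
      obtain ⟨s, rfl⟩ : ∃ s, t = s + 1 := ⟨t - 1, (Nat.succ_pred_eq_of_pos h1).symm⟩
      simp only [hg, Nat.add_sub_cancel]
      push_cast
      ring
    rw [Finset.sum_congr rfl hconv, ← Finset.Ico_add_one_right_eq_Icc, Finset.sum_Ico_eq_sum_range,
      Nat.add_sub_cancel]
    have heq : ∀ i ∈ Finset.range T, g (1 + i - 1) - g (1 + i) = g i - g (i + 1) := by
      intro i _
      congr 1
      · congr 1; omega
      · congr 1; omega
    rw [Finset.sum_congr rfl heq, Finset.sum_range_sub' g T]
    simp [hg]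
  have hA1 : klDiv ν (p 1) = klDiv ν μ₀ := by
    rw [hkl 1 le_rfl ν hν0 hν1]
    have hF0 : ∀ x, F 0 x = 0 := by
      intro x; rw [hF]; simp
    have h1 : ∑ x, ν x * F (1-1) x = 0 := by
      simp only [Nat.sub_self]
      apply Finset.sum_eq_zero
      intro x _
      rw [hF0 x, mul_zero]
    have h2 : W (1-1) = 0 := by
      simp only [Nat.sub_self, hW]
      have : ∀ y, μ₀ y * Real.exp (-β * F 0 y) = μ₀ y := by
        intro y; rw [hF0 y, mul_zero, Real.exp_zero, mul_one]
      rw [Finset.sum_congr rfl (fun y _ => this y), hsum, Real.log_one]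
    rw [h1, h2]
    ring
  rw [Finset.sum_congr rfl (fun t htm => hstep t (Finset.mem_Icc.mp htm).1),
    Finset.sum_add_distrib, htele, hA1]
  ring
end

section
/- Let (X, ρ) be a Polish metric space and P a Markov kernel on X. If there exists κ ∈ (0,1] such that W₁(P(·|x), P(·|y)) ≤ (1−κ)ρ(x,y) for all x,y, then for all probability measures μ, ν on X, W₁(Pμ, Pν) ≤ (1−κ)W₁(μ,ν), where W₁ is the L¹ Wasserstein distance. -/
open Finset Real

/-- L¹ Wasserstein distance between distributions on a finite set, w.r.t. cost `d`. -/
noncomputable def W1 {X : Type*} [Fintype X] (d : X → X → ℝ) (μ ν : X → ℝ) : ℝ :=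
  sInf { r | ∃ υ : X → X → ℝ, (∀ x y, 0 ≤ υ x y) ∧ (∀ x, ∑ y, υ x y = μ x) ∧
    (∀ y, ∑ x, υ x y = ν y) ∧ r = ∑ x, ∑ y, υ x y * d x y }

/-- Action of a Markov kernel on a distribution. -/
noncomputable def kernelAct {X : Type*} [Fintype X] (P : X → X → ℝ) (μ : X → ℝ) : X → ℝ :=
  fun y => ∑ x, μ x * P x y

section Aux
variable {X : Type*} [Fintype X]

lemma sum4_comm {M : Type*} [AddCommMonoid M] (f : X → X → X → X → M) :
    ∑ a, ∑ b, ∑ x, ∑ y, f a b x y = ∑ x, ∑ y, ∑ a, ∑ b, f a b x y := by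
  calc ∑ a, ∑ b, ∑ x, ∑ y, f a b x y
      = ∑ a, ∑ x, ∑ b, ∑ y, f a b x y :=
        Finset.sum_congr rfl fun a _ => Finset.sum_comm
    _ = ∑ x, ∑ a, ∑ b, ∑ y, f a b x y := Finset.sum_comm
    _ = ∑ x, ∑ a, ∑ y, ∑ b, f a b x y := Finset.sum_congr rfl fun x _ =>
          Finset.sum_congr rfl fun a _ => Finset.sum_comm
    _ = ∑ x, ∑ y, ∑ a, ∑ b, f a b x y := Finset.sum_congr rfl fun x _ => Finset.sum_comm

def CSet (d : X → X → ℝ) (μ ν : X → ℝ) : Set ℝ :=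
  { r | ∃ υ : X → X → ℝ, (∀ x y, 0 ≤ υ x y) ∧ (∀ x, ∑ y, υ x y = μ x) ∧
    (∀ y, ∑ x, υ x y = ν y) ∧ r = ∑ x, ∑ y, υ x y * d x y }

lemma W1_eq (d : X → X → ℝ) (μ ν : X → ℝ) : W1 d μ ν = sInf (CSet d μ ν) := rfl

lemma CSet_bddBelow (d : X → X → ℝ) (hd : ∀ x y, 0 ≤ d x y) (μ ν : X → ℝ) :
    BddBelow (CSet d μ ν) := by
  refine ⟨0, fun r hr => ?_⟩
  obtain ⟨υ, h0, -, -, rfl⟩ := hr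
  exact Finset.sum_nonneg fun x _ => Finset.sum_nonneg fun y _ =>
    mul_nonneg (h0 x y) (hd x y)

lemma CSet_nonempty (d : X → X → ℝ) (μ ν : X → ℝ) (hμ : IsProb μ) (hν : IsProb ν) :
    (CSet d μ ν).Nonempty := by
  refine ⟨_, fun x y => μ x * ν y, fun x y => mul_nonneg (hμ.1 x) (hν.1 y), ?_, ?_, rfl⟩
  · intro x; rw [← Finset.mul_sum, hν.2, mul_one]
  · intro y; rw [← Finset.sum_mul, hμ.2, one_mul]

lemma W1_le_of_mem (d : X → X → ℝ) (hd : ∀ x y, 0 ≤ d x y) {μ ν : X → ℝ} {r : ℝ}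
    (hr : r ∈ CSet d μ ν) : W1 d μ ν ≤ r :=
  csInf_le (CSet_bddBelow d hd μ ν) hr

lemma exists_near_coupling (d : X → X → ℝ) (μ ν : X → ℝ) (hμ : IsProb μ) (hν : IsProb ν)
    {ε : ℝ} (hε : 0 < ε) : ∃ r ∈ CSet d μ ν, r < W1 d μ ν + ε :=
  Real.lt_sInf_add_pos (CSet_nonempty d μ ν hμ hν) hε

end Aux

/-- Ollivier's contraction property: positive Ricci curvature of a Markov kernel
implies Wasserstein contraction of its action on probability measures. -/
theorem ricci_curvature_implies_wasserstein_contraction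
    {X : Type*} [Fintype X] [Nonempty X] [MetricSpace X]
    (P : X → X → ℝ) (hP0 : ∀ x y, 0 ≤ P x y) (hP1 : ∀ x, ∑ y, P x y = 1)
    (κ : ℝ) (hκ0 : 0 < κ) (hκ1 : κ ≤ 1)
    (hRic : ∀ x y : X, W1 (fun a b => dist a b) (P x) (P y) ≤ (1 - κ) * dist x y) :
    ∀ μ ν : X → ℝ, IsProb μ → IsProb ν →
      W1 (fun a b => dist a b) (kernelAct P μ) (kernelAct P ν) ≤
        (1 - κ) * W1 (fun a b => dist a b) μ ν := by
  intro μ ν hμ hν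
  set d : X → X → ℝ := fun a b => dist a b with hd
  have hd0 : ∀ x y, 0 ≤ d x y := fun x y => dist_nonneg
  have hκ' : 0 ≤ 1 - κ := by linarith
  -- Step 1: for any coupling cost c of (μ,ν), W1(Pμ,Pν) ≤ (1-κ)c
  have key : ∀ r ∈ CSet d μ ν, W1 d (kernelAct P μ) (kernelAct P ν) ≤ (1 - κ) * r := by
    rintro r ⟨υ, hυ0, hυ1, hυ2, rfl⟩
    -- suffices: for all ε > 0, LHS ≤ (1-κ)*cost + ε
    refine le_of_forall_pos_le_add fun ε hε => ?_
    -- choose near-optimal couplings ξ x y of (P x, P y)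
    have hchoice : ∀ x y : X, ∃ ξ : X → X → ℝ, (∀ a b, 0 ≤ ξ a b) ∧
        (∀ a, ∑ b, ξ a b = P x a) ∧ (∀ b, ∑ a, ξ a b = P y b) ∧
        ∑ a, ∑ b, ξ a b * d a b ≤ (1 - κ) * d x y + ε := by
      intro x y
      obtain ⟨r, hrmem, hrlt⟩ := exists_near_coupling d (P x) (P y)
        ⟨hP0 x, hP1 x⟩ ⟨hP0 y, hP1 y⟩ hε
      obtain ⟨ξ, h0, h1, h2, rfl⟩ := hrmem
      exact ⟨ξ, h0, h1, h2, le_of_lt (lt_of_lt_of_le hrlt (by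
        have := hRic x y; simp only [← hd] at this ⊢; linarith))⟩
    choose ξ hξ0 hξ1 hξ2 hξc using hchoice
    -- glued coupling
    set Θ : X → X → ℝ := fun a b => ∑ x, ∑ y, υ x y * ξ x y a b with hΘ
    have hΘmem : (∑ a, ∑ b, Θ a b * d a b) ∈ CSet d (kernelAct P μ) (kernelAct P ν) := by
      refine ⟨Θ, ?_, ?_, ?_, rfl⟩
      · intro a b
        exact Finset.sum_nonneg fun x _ => Finset.sum_nonneg fun y _ =>
          mul_nonneg (hυ0 x y) (hξ0 x y a b)
      · intro a
        simp only [hΘ]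
        rw [Finset.sum_comm]
        calc ∑ x, ∑ b, ∑ y, υ x y * ξ x y a b
            = ∑ x, ∑ y, ∑ b, υ x y * ξ x y a b := by
              exact Finset.sum_congr rfl fun x _ => Finset.sum_comm
          _ = ∑ x, ∑ y, υ x y * P x a := by
              refine Finset.sum_congr rfl fun x _ => Finset.sum_congr rfl fun y _ => ?_
              rw [← Finset.mul_sum, hξ1 x y a]
          _ = ∑ x, μ x * P x a := by
              refine Finset.sum_congr rfl fun x _ => ?_
              rw [← Finset.sum_mul, hυ1 x]
          _ = kernelAct P μ a := rfl
      · intro b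
        simp only [hΘ]
        rw [Finset.sum_comm]
        calc ∑ x, ∑ a, ∑ y, υ x y * ξ x y a b
            = ∑ x, ∑ y, ∑ a, υ x y * ξ x y a b := by
              exact Finset.sum_congr rfl fun x _ => Finset.sum_comm
          _ = ∑ x, ∑ y, υ x y * P y b := by
              refine Finset.sum_congr rfl fun x _ => Finset.sum_congr rfl fun y _ => ?_
              rw [← Finset.mul_sum, hξ2 x y b]
          _ = ∑ y, ∑ x, υ x y * P y b := Finset.sum_comm
          _ = ∑ y, ν y * P y b := by
              refine Finset.sum_congr rfl fun y _ => ?_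
              rw [← Finset.sum_mul, hυ2 y]
          _ = kernelAct P ν b := rfl
    have hcost : (∑ a, ∑ b, Θ a b * d a b)
        = ∑ x, ∑ y, υ x y * (∑ a, ∑ b, ξ x y a b * d a b) := by
      simp only [hΘ, Finset.sum_mul, Finset.mul_sum, mul_assoc]
      exact sum4_comm _
    have htot : ∑ x, ∑ y, υ x y = 1 := by
      rw [Finset.sum_congr rfl fun x _ => hυ1 x, hμ.2]
    have hW : W1 d (kernelAct P μ) (kernelAct P ν) ≤ ∑ a, ∑ b, Θ a b * d a b :=
      W1_le_of_mem d hd0 hΘmem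
    calc W1 d (kernelAct P μ) (kernelAct P ν)
        ≤ ∑ x, ∑ y, υ x y * (∑ a, ∑ b, ξ x y a b * d a b) := by rw [← hcost]; exact hW
      _ ≤ ∑ x, ∑ y, υ x y * ((1 - κ) * d x y + ε) := by
          refine Finset.sum_le_sum fun x _ => Finset.sum_le_sum fun y _ =>
            mul_le_mul_of_nonneg_left (hξc x y) (hυ0 x y)
      _ = (1 - κ) * (∑ x, ∑ y, υ x y * d x y) + ε := by
          have hxy : ∀ x y : X, υ x y * ((1 - κ) * d x y + ε)
              = (1 - κ) * (υ x y * d x y) + υ x y * ε := fun x y => by ring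
          simp_rw [hxy, Finset.sum_add_distrib, ← Finset.mul_sum, ← Finset.sum_mul, htot,
            one_mul]
  -- Step 2: pass to infimum
  refine le_of_forall_pos_le_add fun ε hε => ?_
  obtain ⟨r, hrmem, hrlt⟩ := exists_near_coupling d μ ν hμ hν (show (0:ℝ) < ε / (1 - κ + 1) by positivity)
  calc W1 d (kernelAct P μ) (kernelAct P ν) ≤ (1 - κ) * r := key r hrmem
    _ ≤ (1 - κ) * (W1 d μ ν + ε / (1 - κ + 1)) :=
        mul_le_mul_of_nonneg_left (le_of_lt hrlt) hκ'
    _ ≤ (1 - κ) * W1 d μ ν + ε := by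
        rw [mul_add]
        have : (1 - κ) * (ε / (1 - κ + 1)) ≤ ε := by
          rw [div_eq_inv_mul, ← mul_assoc]
          have h1 : (1 - κ) * (1 - κ + 1)⁻¹ ≤ 1 := by
            rw [mul_inv_le_iff₀ (by linarith)]; linarith
          nlinarith [hε.le]
        linarith
end
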